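/- Let E be a real Banach space and B : E × E → ℝ a continuous, symmetric, positive-definite bilinear form. Let F ⊆ E be a closed subspace of finite codimension such that its B-orthogonal F^⊥ = {x ∈ E : B(x, y) = 0 for all y ∈ F} is a topological complement of F in E (i.e. E = F ⊕ F^⊥ as topological direct sum). If F' is a linear subspace of E containing F, then F' is closed, F' has finite codimension in E, and its B-orthogonal (F')^⊥ is a topological complement of F' in E. -/

import Mathlib

/-- The `B`-orthogonal of a subspace `F` of `E`, for a continuous bilinear form `B`:
`F^⊥ = {x ∈ E : B(x, y) = 0 for all y ∈ F}`. -/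
def Borthogonal {E : Type*} [NormedAddCommGroup E] [NormedSpace ℝ E]
    (B : E →L[ℝ] E →L[ℝ] ℝ) (F : Submodule ℝ E) : Submodule ℝ E where
  carrier := {x | ∀ y ∈ F, B x y = 0}
  add_mem' := by
    intro a b ha hb
    intro y hy
    simp [ha y hy, hb y hy]
  zero_mem' := by simp
  smul_mem' := by
    intro c a ha y hy
    simp [ha y hy]

lemma mem_Borthogonal {E : Type*} [NormedAddCommGroup E] [NormedSpace ℝ E]
    (B : E →L[ℝ] E →L[ℝ] ℝ) (F : Submodule ℝ E) (x : E) :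
    x ∈ Borthogonal B F ↔ ∀ y ∈ F, B x y = 0 := Iff.rfl

lemma Borthogonal_isClosed {E : Type*} [NormedAddCommGroup E] [NormedSpace ℝ E]
    (B : E →L[ℝ] E →L[ℝ] ℝ) (F : Submodule ℝ E) :
    IsClosed ((Borthogonal B F : Submodule ℝ E) : Set E) := by
  have : ((Borthogonal B F : Submodule ℝ E) : Set E) =
      ⋂ y ∈ F, ((fun x => B x y) ⁻¹' {0}) := by
    ext x
    simp [mem_Borthogonal]
  rw [this]
  refine isClosed_biInter fun y _ => ?_
  exact isClosed_singleton.preimage (B.flip y).continuous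

/-- **Supplemented subspaces of finite codimension.**
Let `E` be a real Banach space and `B` a continuous, symmetric, positive-definite
bilinear form on `E`. Let `F ⊆ E` be a closed subspace of finite codimension whose
`B`-orthogonal `F^⊥` is a topological complement of `F` in `E` (i.e. `F` and `F^⊥` are
complementary and `F^⊥` is closed, so the projections are continuous by the open
mapping theorem). Then every subspace `F'` containing `F` is closed, of finite
codimension in `E`, and its `B`-orthogonal is a topological complement of `F'`. -/
theorem superspace_closed_finite_codim_complemented
    (E : Type*) [NormedAddCommGroup E] [NormedSpace ℝ E] [CompleteSpace E]
    (B : E →L[ℝ] E →L[ℝ] ℝ)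
    (hBsym : ∀ x y : E, B x y = B y x)
    (hBpos : ∀ x : E, x ≠ 0 → 0 < B x x)
    (F : Submodule ℝ E)
    (hFclosed : IsClosed (F : Set E))
    (hFcodim : FiniteDimensional ℝ (E ⧸ F))
    (hcompl : IsCompl F (Borthogonal B F))
    (horthclosed : IsClosed ((Borthogonal B F : Submodule ℝ E) : Set E))
    (F' : Submodule ℝ E) (hFF' : F ≤ F') :
    IsClosed (F' : Set E) ∧
    FiniteDimensional ℝ (E ⧸ F') ∧
    IsCompl F' (Borthogonal B F') ∧
    IsClosed ((Borthogonal B F' : Submodule ℝ E) : Set E) := by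
  haveI : IsClosed (F : Set E) := hFclosed
  set G : Submodule ℝ E := Borthogonal B F with hG
  set W : Submodule ℝ E := F' ⊓ G with hW
  -- W is finite dimensional
  have hWfin : FiniteDimensional ℝ W := by
    have hinj : Function.Injective (F.mkQ.comp W.subtype) := by
      rw [← LinearMap.ker_eq_bot]
      rw [Submodule.eq_bot_iff]
      intro w hw
      have hwF : (w : E) ∈ F := by
        have : F.mkQ (w : E) = 0 := hw
        rwa [← Submodule.Quotient.mk_eq_zero]
      have hwG : (w : E) ∈ G := w.2.2
      have : (w : E) ∈ F ⊓ G := ⟨hwF, hwG⟩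
      rw [hcompl.inf_eq_bot] at this
      exact Subtype.ext this
    exact FiniteDimensional.of_injective (F.mkQ.comp W.subtype) hinj
  -- the restriction of B to W
  let b : LinearMap.BilinForm ℝ W := LinearMap.mk₂ ℝ (fun w u : W => B w u)
    (fun a b c => by simp) (fun c a u => by simp) (fun a u v => by simp)
    (fun c a u => by simp)
  have hb : b.Nondegenerate := by
    refine LinearMap.BilinForm.Nondegenerate.ofSeparatingLeft ?_
    intro w hw
    by_contra hw0
    have hwE : (w : E) ≠ 0 := fun h => hw0 (Subtype.ext h)
    have := hBpos w hwE
    have h0 : b w w = 0 := hw w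
    simp only [b, LinearMap.mk₂_apply] at h0
    rw [h0] at this
    exact lt_irrefl 0 this
  haveI := hWfin
  -- F' = F ⊔ W
  have hF'eq : F' = F ⊔ W := by
    apply le_antisymm
    · intro x hx
      have hx' : x ∈ F ⊔ G := by
        rw [hcompl.sup_eq_top]; trivial
      obtain ⟨f, hf, g, hg, rfl⟩ := Submodule.mem_sup.1 hx'
      have hgF' : g ∈ F' := by
        have : g = (f + g) - f := by abel
        rw [this]
        exact Submodule.sub_mem _ hx (hFF' hf)
      exact Submodule.add_mem_sup hf ⟨hgF', hg⟩
    · exact sup_le hFF' inf_le_left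
  -- closedness of F'
  have hF'closed : IsClosed (F' : Set E) := by
    haveI hWF' : FiniteDimensional ℝ (F'.map F.mkQ) :=
      FiniteDimensional.finiteDimensional_submodule _
    have hmapclosed : IsClosed ((F'.map F.mkQ : Submodule ℝ (E ⧸ F)) : Set (E ⧸ F)) :=
      Submodule.closed_of_finiteDimensional _
    have hcont : Continuous F.mkQ := continuous_quot_mk
    have hpre : (F' : Set E) = F.mkQ ⁻¹' (F'.map F.mkQ : Set (E ⧸ F)) := by
      have : Submodule.comap F.mkQ (F'.map F.mkQ) = F' := by
        rw [Submodule.comap_map_eq, F.ker_mkQ, sup_eq_left.2 hFF']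
      conv_lhs => rw [← this]
      rfl
    rw [hpre]
    exact hmapclosed.preimage hcont
  refine ⟨hF'closed, ?_, ?_, Borthogonal_isClosed B F'⟩
  · -- finite codimension
    let f : (E ⧸ F) →ₗ[ℝ] (E ⧸ F') := Submodule.mapQ F F' LinearMap.id hFF'
    have hsurj : Function.Surjective f := by
      intro z
      obtain ⟨x, rfl⟩ := F'.mkQ_surjective z
      exact ⟨F.mkQ x, by simp [f, Submodule.mapQ_apply]⟩
    exact Module.Finite.of_surjective f hsurj
  · -- IsCompl
    constructor
    · rw [disjoint_iff, Submodule.eq_bot_iff]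
      rintro x ⟨hx1, hx2⟩
      by_contra hx0
      have := hBpos x hx0
      rw [hx2 x hx1] at this
      exact lt_irrefl 0 this
    · rw [codisjoint_iff, Submodule.eq_top_iff']
      intro x
      have hx' : x ∈ F ⊔ G := by
        rw [hcompl.sup_eq_top]; trivial
      obtain ⟨f, hf, g, hg, rfl⟩ := Submodule.mem_sup.1 hx'
      -- project g onto W using b
      let φ : Module.Dual ℝ W := ((B g).toLinearMap).comp W.subtype
      let w : W := (b.toDual hb).symm φ
      have hw : ∀ u : W, B (w : E) u = B g u := by
        intro u
        have h := LinearMap.BilinForm.apply_toDual_symm_apply (B := b) (hB := hb) (f := φ) (v := u)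
        have h1 : b ((b.toDual hb).symm φ) u = B (w : E) u := rfl
        have h2 : φ u = B g u := rfl
        rw [h1, h2] at h
        exact h
      have hz : g - (w : E) ∈ Borthogonal B F' := by
        intro y hy
        rw [hF'eq] at hy
        obtain ⟨f₁, hf₁, w₁, hw₁, rfl⟩ := Submodule.mem_sup.1 hy
        have hgw1 : g - (w : E) ∈ G := Submodule.sub_mem _ hg w.2.2
        have h1 : B (g - (w : E)) f₁ = 0 := hgw1 f₁ hf₁
        have h2 : B (g - (w : E)) w₁ = 0 := by
          have : B (g - (w : E)) w₁ = B g w₁ - B (w : E) w₁ := by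
            rw [map_sub, ContinuousLinearMap.sub_apply]
          rw [this, hw ⟨w₁, hw₁⟩]
          simp
        calc B (g - (w : E)) (f₁ + w₁) = B (g - (w : E)) f₁ + B (g - (w : E)) w₁ := map_add _ _ _
          _ = 0 := by rw [h1, h2, add_zero]
      have hfw : f + (w : E) ∈ F' := by
        rw [hF'eq]
        exact Submodule.add_mem_sup hf w.2
      have : f + g = (f + (w : E)) + (g - (w : E)) := by abel
      rw [this]
      exact Submodule.add_mem_sup hfw hz
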